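/- Suppose the linear operator P_T − P_T R_p P_T has operator norm (in Frobenius norm) at most 1/2, i.e., ‖(P_T − P_T R_p P_T)(X)‖_F ≤ (1/2)‖X‖_F for all X, where R_p(X) = Σ_{ij} (δ_{ij}/p_{ij}) X_{ij} e_i e_j^T with δ_{ij} ∈ {0,1} and 0 < p_{ij} ≤ 1. Then for every Z with R_p(Z) = 0, ‖P_T(Z)‖_F ≤ (max_{ij} √(2/p_{ij})) · ‖P_{T⊥}(Z)‖_F. -/

import Mathlib

open Matrix BigOperators

noncomputable def frob {m n : ℕ} (A : Matrix (Fin m) (Fin n) ℝ) : ℝ :=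
  Real.sqrt (∑ i, ∑ j, (A i j)^2)

noncomputable def spec {m n : ℕ} (A : Matrix (Fin m) (Fin n) ℝ) : ℝ :=
  ‖LinearMap.toContinuousLinearMap (Matrix.toEuclideanLin A)‖

noncomputable def nuclear {n : ℕ} (A : Matrix (Fin n) (Fin n) ℝ) : ℝ :=
  ∑ i, Real.sqrt ((show (Aᵀ * A).IsHermitian by
    simpa using Matrix.isHermitian_conjTranspose_mul_self A).eigenvalues i)

noncomputable def ip {n : ℕ} (A B : Matrix (Fin n) (Fin n) ℝ) : ℝ := (Aᵀ * B).trace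

noncomputable def PT {n r : ℕ} (U V : Matrix (Fin n) (Fin r) ℝ)
    (Z : Matrix (Fin n) (Fin n) ℝ) : Matrix (Fin n) (Fin n) ℝ :=
  U * Uᵀ * Z + Z * (V * Vᵀ) - U * Uᵀ * Z * (V * Vᵀ)

noncomputable def PTperp {n r : ℕ} (U V : Matrix (Fin n) (Fin r) ℝ)
    (Z : Matrix (Fin n) (Fin n) ℝ) : Matrix (Fin n) (Fin n) ℝ := Z - PT U V Z

noncomputable def rowTwo {m n : ℕ} (A : Matrix (Fin m) (Fin n) ℝ) : ℝ :=
  ⨆ i, Real.sqrt (∑ j, (A i j)^2)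

noncomputable def maxAbs {m n : ℕ} (A : Matrix (Fin m) (Fin n) ℝ) : ℝ :=
  ⨆ i, ⨆ j, |A i j|

/- auxiliary lemmas -/

lemma PT_idem' {n r : ℕ} (U V : Matrix (Fin n) (Fin r) ℝ)
    (hU : Uᵀ * U = 1) (hV : Vᵀ * V = 1) (Z : Matrix (Fin n) (Fin n) ℝ) :
    PT U V (PT U V Z) = PT U V Z := by
  have hUU : ∀ X : Matrix (Fin r) (Fin n) ℝ, Uᵀ * (U * X) = X := by
    intro X; rw [← Matrix.mul_assoc, hU, Matrix.one_mul]
  have hVV : ∀ X : Matrix (Fin r) (Fin n) ℝ, Vᵀ * (V * X) = X := by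
    intro X; rw [← Matrix.mul_assoc, hV, Matrix.one_mul]
  simp only [PT, Matrix.mul_add, Matrix.add_mul, Matrix.mul_sub, Matrix.sub_mul,
    Matrix.mul_assoc, hUU, hVV]
  abel

lemma cyc' {a b c : ℕ} (X : Matrix (Fin a) (Fin b) ℝ) (Y : Matrix (Fin b) (Fin c) ℝ)
    (W : Matrix (Fin c) (Fin a) ℝ) : (X * (Y * W)).trace = (Y * (W * X)).trace := by
  rw [← Matrix.mul_assoc, Matrix.trace_mul_comm, ← Matrix.mul_assoc, Matrix.trace_mul_comm]

lemma PT_adj' {n r : ℕ} (U V : Matrix (Fin n) (Fin r) ℝ)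
    (A B : Matrix (Fin n) (Fin n) ℝ) :
    (Aᵀ * PT U V B).trace = ((PT U V A)ᵀ * B).trace := by
  simp only [PT, Matrix.transpose_sub, Matrix.transpose_add, Matrix.transpose_mul,
    Matrix.transpose_transpose, Matrix.mul_add, Matrix.mul_sub, Matrix.add_mul, Matrix.sub_mul,
    Matrix.trace_add, Matrix.trace_sub, Matrix.mul_assoc]
  rw [show Aᵀ*(B*(V*Vᵀ)) = (Aᵀ*B)*(V*Vᵀ) by rw [Matrix.mul_assoc],
      show Aᵀ*(U*(Uᵀ*(B*(V*Vᵀ)))) = (Aᵀ*(U*(Uᵀ*B)))*(V*Vᵀ) by simp [Matrix.mul_assoc],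
      cyc' (Aᵀ*B) V Vᵀ, cyc' (Aᵀ*(U*(Uᵀ*B))) V Vᵀ]

lemma ipE_trace' {n : ℕ} (A B : Matrix (Fin n) (Fin n) ℝ) :
    ∑ i, ∑ j, A i j * B i j = (Aᵀ * B).trace := by
  simp only [Matrix.trace, Matrix.diag, Matrix.mul_apply, Matrix.transpose_apply]
  rw [Finset.sum_comm]

lemma ipE_le_frob' {n : ℕ} (A B : Matrix (Fin n) (Fin n) ℝ) :
    ∑ i, ∑ j, A i j * B i j ≤ frob A * frob B := by
  have h := Real.sum_mul_le_sqrt_mul_sqrt (Finset.univ : Finset (Fin n × Fin n))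
    (fun q => A q.1 q.2) (fun q => B q.1 q.2)
  simpa [frob, Fintype.sum_prod_type] using h

theorem stmt11 (n r : ℕ) (U V : Matrix (Fin n) (Fin r) ℝ)
    (hU : Uᵀ * U = 1) (hV : Vᵀ * V = 1)
    (δ p : Fin n → Fin n → ℝ)
    (hδ : ∀ i j, δ i j = 0 ∨ δ i j = 1)
    (hp : ∀ i j, 0 < p i j ∧ p i j ≤ 1)
    (RP : Matrix (Fin n) (Fin n) ℝ → Matrix (Fin n) (Fin n) ℝ)
    (hRP : ∀ Z, RP Z = Matrix.of fun i j => δ i j / p i j * Z i j)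
    (hcontr : ∀ X : Matrix (Fin n) (Fin n) ℝ,
        frob (PT U V X - PT U V (RP (PT U V X))) ≤ (1 / 2) * frob X)
    (Z : Matrix (Fin n) (Fin n) ℝ) (hZ : RP Z = 0) :
    frob (PT U V Z) ≤ (⨆ i, ⨆ j, Real.sqrt (2 / p i j)) * frob (PTperp U V Z) := by
  rcases Nat.eq_zero_or_pos n with hn | hn
  · subst hn
    simp [frob]
  set W := PT U V Z with hWdef
  set Wp := PTperp U V Z with hWpdef
  set c := ⨆ i, ⨆ j, Real.sqrt (2 / p i j) with hcdef
  -- entries where δ = 1 have Z = 0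
  have hδZ : ∀ i j, δ i j * Z i j = 0 := by
    intro i j
    have h0 : δ i j / p i j * Z i j = 0 := by
      have := congrFun (congrFun (hZ.symm.trans (hRP Z)).symm i) j
      simpa using this
    have hpne : p i j ≠ 0 := (hp i j).1.ne'
    field_simp at h0
    linarith
  have hWW : ∀ i j, δ i j = 1 → W i j = - Wp i j := by
    intro i j hd
    have hz : Z i j = 0 := by have := hδZ i j; rw [hd] at this; linarith
    have : Wp i j = Z i j - W i j := rfl
    rw [hz] at this; linarith
  -- bound on c
  have hle : ∀ i j, Real.sqrt (2 / p i j) ≤ c := by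
    intro i j
    have h1 : Real.sqrt (2 / p i j) ≤ ⨆ j, Real.sqrt (2 / p i j) :=
      le_ciSup (f := fun j => Real.sqrt (2 / p i j)) (Set.finite_range _).bddAbove j
    have h2 : (⨆ j, Real.sqrt (2 / p i j)) ≤ c :=
      le_ciSup (f := fun i => ⨆ j, Real.sqrt (2 / p i j)) (Set.finite_range _).bddAbove i
    linarith
  obtain ⟨i0⟩ := Fin.pos_iff_nonempty.mp hn
  have hc0 : 0 ≤ c := le_trans (Real.sqrt_nonneg _) (hle i0 i0)
  have hcsq : ∀ i j, 2 / p i j ≤ c ^ 2 := by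
    intro i j
    have h := hle i j
    have := mul_self_le_mul_self (Real.sqrt_nonneg (2 / p i j)) h
    rw [Real.mul_self_sqrt (by have := (hp i j).1; positivity)] at this
    nlinarith
  -- abbreviations for the sums
  set SW := ∑ i, ∑ j, (W i j) ^ 2 with hSW
  set SWp := ∑ i, ∑ j, (Wp i j) ^ 2 with hSWp
  set T := ∑ i, ∑ j, δ i j / p i j * (W i j) ^ 2 with hT
  have hSW0 : 0 ≤ SW := Finset.sum_nonneg fun i _ => Finset.sum_nonneg fun j _ => sq_nonneg _
  have hSWp0 : 0 ≤ SWp := Finset.sum_nonneg fun i _ => Finset.sum_nonneg fun j _ => sq_nonneg _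
  have hfrobW : frob W * frob W = SW := Real.mul_self_sqrt hSW0
  -- Claim 1 : SW ≤ 2 * T
  have hPTW : PT U V W = W := PT_idem' U V hU hV Z
  have hcs : ∑ i, ∑ j, W i j * (W - PT U V (RP W)) i j ≤ frob W * frob (W - PT U V (RP W)) :=
    ipE_le_frob' _ _
  have hc2 : frob (W - PT U V (RP W)) ≤ (1 / 2) * frob W := by
    have h := hcontr W
    rw [hPTW] at h
    exact h
  have hip : ∑ i, ∑ j, W i j * (PT U V (RP W)) i j = T := by
    rw [ipE_trace', PT_adj', hPTW, ← ipE_trace']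
    rw [hT]
    apply Finset.sum_congr rfl; intro i _
    apply Finset.sum_congr rfl; intro j _
    rw [hRP]
    simp [Matrix.of_apply]
    ring
  have hsplit : ∑ i, ∑ j, W i j * (W - PT U V (RP W)) i j = SW - T := by
    rw [hSW, ← hip, ← Finset.sum_sub_distrib]
    apply Finset.sum_congr rfl; intro i _
    rw [← Finset.sum_sub_distrib]
    apply Finset.sum_congr rfl; intro j _
    simp [Matrix.sub_apply]
    ring
  have hclaim1 : SW ≤ 2 * T := by
    have hfr0 : 0 ≤ frob W := Real.sqrt_nonneg _
    have : SW - T ≤ frob W * ((1 / 2) * frob W) :=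
      le_trans (hsplit ▸ hcs) (mul_le_mul_of_nonneg_left hc2 hfr0)
    nlinarith
  -- Claim 2 : T ≤ (c^2 / 2) * SWp
  have hclaim2 : T ≤ c ^ 2 / 2 * SWp := by
    rw [hT, hSWp, Finset.mul_sum]
    apply Finset.sum_le_sum; intro i _
    rw [Finset.mul_sum]
    apply Finset.sum_le_sum; intro j _
    rcases hδ i j with h0 | h1
    · rw [h0]
      have : (0:ℝ) / p i j * W i j ^ 2 = 0 := by ring
      rw [this]
      positivity
    · rw [h1, hWW i j h1]
      have hpij := (hp i j).1
      have h2 : (1:ℝ) / p i j ≤ c ^ 2 / 2 := by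
        have := hcsq i j
        rw [div_le_iff₀ hpij] at this ⊢
        linarith
      calc 1 / p i j * (- Wp i j) ^ 2 = 1 / p i j * Wp i j ^ 2 := by ring
        _ ≤ c ^ 2 / 2 * Wp i j ^ 2 := by
            apply mul_le_mul_of_nonneg_right h2 (sq_nonneg _)
  -- combine
  have hfinal : SW ≤ c ^ 2 * SWp := by nlinarith
  calc frob W = Real.sqrt SW := rfl
    _ ≤ Real.sqrt (c ^ 2 * SWp) := Real.sqrt_le_sqrt hfinal
    _ = c * Real.sqrt SWp := by
        rw [Real.sqrt_mul (sq_nonneg c), Real.sqrt_sq hc0]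
    _ = c * frob Wp := rfl
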